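/- Suppose T := min(G/(M−ℓ), B) is a positive integer with T > N_ℓ. Define g := 1/(1 − ((M−ℓ)(T−1)/(D + (M−ℓ)(N_ℓ + T))) · (1 − 1/T)^{T − N_ℓ − 1}), and define the threshold distribution p on {N_ℓ+1, …, T} by p_{N_ℓ+1} := ((D + (M−ℓ)(N_ℓ+1)) · g / (D + (M−ℓ)(N_ℓ + T))) · (1 − 1/T)^{T − N_ℓ − 1} and p_t := (g/T) · (1 − 1/T)^{T − t} for t ∈ {N_ℓ+2, …, T}. Then (i) Σ_{t=N_ℓ+1}^T p_t = 1; and (ii) for every integer N ≥ N_ℓ + 1, the expected total cost Σ_{t=N_ℓ+1}^T p_t · C(t, N) is at most g · SDOPT(N). Thus this randomized policy has state-dependent competitive ratio at most g at this state. -/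

import Mathlib

private lemma stmt10aux1 (dD dL dT dm gg R : ℝ) (hne : dD + dm * (dL + dT) ≠ 0)
    (hgg : gg * (1 - dm * (dT - 1) / (dD + dm * (dL + dT)) * R) = 1) :
    (dD + dm * (dL + 1)) * gg / (dD + dm * (dL + dT)) * R + gg * (1 - R) = 1 := by
  field_simp at hgg ⊢
  linear_combination hgg

private lemma stmt10aux2 (dD dL dT dm gg R : ℝ) (hne : dD + dm * (dL + dT) ≠ 0) :
    (dD + dm * (dL + 1)) * gg / (dD + dm * (dL + dT)) * R * (dD + dm * dL + dm * dT)
      + (dD + dm * (dL + 1)) * (gg * (1 - R)) = gg * (dD + dm * (dL + 1)) := by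
  field_simp
  ring

private lemma stmt10aux3 (A dD dn dT dm gg R : ℝ) (hT : dT ≠ 0)
    (h : A + gg / dT * R * (dD + dm * dn) + (dD + dm * dn) * (gg * (1 - R))
      = gg * (dD + dm * dn)) :
    A + gg / dT * R * (dD + dm * dn + dm * dT) + (dD + dm * (dn + 1)) * (gg * (1 - R))
      = gg * (dD + dm * (dn + 1)) := by
  have hc : gg / dT * R * (dm * dT) = gg * R * dm := by
    field_simp
  linear_combination h + hc

set_option maxHeartbeats 1600000 in
/-- The randomized policy sampling its threshold from the distribution `p` on
`{N_ℓ+1, …, T}` with `T = min(G/(M-ℓ), B)` is a probability distribution whose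
expected total cost is at most `g · SDOPT(N)` for every instance `N ≥ N_ℓ + 1`:
state-dependent competitive ratio at most `g`. -/
theorem stmt10 (M B G ℓ : ℕ) (hM : 2 ≤ M) (hB : 1 ≤ B)
    (hBG : B < G) (hGMB : G < M * B) (hℓ : ℓ ≤ M - 1)
    (N : ℕ → ℕ) (hN0 : N 0 = 0)
    (hNpos : ∀ n, 1 ≤ n → n ≤ ℓ → 0 < N n)
    (hNmono : ∀ i j, 1 ≤ i → i ≤ j → j ≤ ℓ → N i ≤ N j)
    (D : ℕ) (hD : D = ∑ n ∈ Finset.Icc 1 ℓ, N n)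
    (T : ℕ) (hTpos : 0 < T) (hTN : N ℓ < T)
    (hT : (T : ℝ) = min ((G : ℝ) / ((M : ℝ) - (ℓ : ℝ))) (B : ℝ))
    (g : ℝ)
    (hg : g = 1 / (1 - (((M - ℓ : ℕ) : ℝ) * ((T : ℝ) - 1) /
        ((D : ℝ) + ((M - ℓ : ℕ) : ℝ) * ((N ℓ : ℝ) + (T : ℝ))))
        * (1 - 1 / (T : ℝ)) ^ (T - N ℓ - 1)))
    (p : ℕ → ℝ)
    (hp1 : p (N ℓ + 1) = (((D : ℝ) + ((M - ℓ : ℕ) : ℝ) * ((N ℓ : ℝ) + 1)) * g /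
        ((D : ℝ) + ((M - ℓ : ℕ) : ℝ) * ((N ℓ : ℝ) + (T : ℝ))))
        * (1 - 1 / (T : ℝ)) ^ (T - N ℓ - 1))
    (hp2 : ∀ t, N ℓ + 2 ≤ t → t ≤ T →
      p t = (g / (T : ℝ)) * (1 - 1 / (T : ℝ)) ^ (T - t)) :
    (∑ t ∈ Finset.Icc (N ℓ + 1) T, p t = 1) ∧
    (∀ n : ℕ, N ℓ + 1 ≤ n →
      ∑ t ∈ Finset.Icc (N ℓ + 1) T, p t *
        ((if n < t then D + (M - ℓ) * n
          else D + (M - ℓ) * (t - 1) + min G ((M - ℓ) * B) : ℕ) : ℝ)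
      ≤ g * ((D + min ((M - ℓ) * min n B) G : ℕ) : ℝ)) := by
  set m := M - ℓ with hm
  set L := N ℓ with hLdef
  have hmpos : 0 < m := by omega
  have hmR : (0:ℝ) < (m:ℝ) := by exact_mod_cast hmpos
  have hMℓcast : ((M:ℝ) - (ℓ:ℝ)) = (m:ℝ) := by
    rw [hm]; exact (Nat.cast_sub (by omega)).symm
  rw [hMℓcast] at hT
  have hT1 : (1:ℝ) ≤ (T:ℝ) := by exact_mod_cast hTpos
  have hT0 : (0:ℝ) < (T:ℝ) := by linarith
  have hTne : (T:ℝ) ≠ 0 := ne_of_gt hT0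
  have hTB' : (T:ℝ) ≤ (B:ℝ) := by rw [hT]; exact min_le_right _ _
  have hTB : T ≤ B := by exact_mod_cast hTB'
  have hTG' : (T:ℝ) ≤ (G:ℝ)/(m:ℝ) := by rw [hT]; exact min_le_left _ _
  have hmTG' : (m:ℝ) * (T:ℝ) ≤ (G:ℝ) := by
    rw [mul_comm]; exact (le_div_iff₀ hmR).mp hTG'
  have hmTG : m * T ≤ G := by exact_mod_cast hmTG'
  have hminGB : min G (m * B) = m * T := by
    rcases min_choice ((G:ℝ)/(m:ℝ)) ((B:ℝ)) with h | h
    · rw [← hT] at h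
      have hG : (m:ℝ) * (T:ℝ) = (G:ℝ) := by rw [h]; field_simp
      have hG' : m * T = G := by exact_mod_cast hG
      have hle : m * T ≤ m * B := Nat.mul_le_mul_left _ hTB
      omega
    · rw [← hT] at h
      have hTB2 : T = B := by exact_mod_cast h
      subst hTB2
      omega
  -- the survival factor r
  set r : ℝ := 1 - 1/(T:ℝ) with hrdef
  have hr0 : (0:ℝ) ≤ r := by
    rw [hrdef]
    have : 1/(T:ℝ) ≤ 1 := by rw [div_le_one hT0]; exact hT1
    linarith
  have hr1 : r < 1 := by
    rw [hrdef]
    have : 0 < 1/(T:ℝ) := by positivity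
    linarith
  have hrne : r ≠ 1 := ne_of_lt hr1
  have hrpow1 : ∀ k : ℕ, r ^ k ≤ 1 := fun k => pow_le_one₀ hr0 hr1.le
  have hrpow0 : ∀ k : ℕ, (0:ℝ) ≤ r ^ k := fun k => pow_nonneg hr0 k
  -- the denominator
  have hL0 : (0:ℝ) ≤ (L:ℝ) := Nat.cast_nonneg _
  have hD0 : (0:ℝ) ≤ (D:ℝ) := Nat.cast_nonneg _
  have hdenpos : (0:ℝ) < (D:ℝ) + (m:ℝ) * ((L:ℝ) + (T:ℝ)) := by nlinarith
  have hdenne : ((D:ℝ) + (m:ℝ) * ((L:ℝ) + (T:ℝ))) ≠ 0 := ne_of_gt hdenpos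
  have hxlt : (m:ℝ) * ((T:ℝ) - 1) < (D:ℝ) + (m:ℝ) * ((L:ℝ) + (T:ℝ)) := by nlinarith
  have hx0 : (0:ℝ) ≤ (m:ℝ) * ((T:ℝ) - 1) / ((D:ℝ) + (m:ℝ) * ((L:ℝ) + (T:ℝ)))
      * r ^ (T - L - 1) := by
    apply mul_nonneg (div_nonneg (by nlinarith) hdenpos.le) (hrpow0 _)
  have hx1 : (m:ℝ) * ((T:ℝ) - 1) / ((D:ℝ) + (m:ℝ) * ((L:ℝ) + (T:ℝ)))
      * r ^ (T - L - 1) < 1 := by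
    have h1 : (m:ℝ) * ((T:ℝ) - 1) / ((D:ℝ) + (m:ℝ) * ((L:ℝ) + (T:ℝ)))
        * r ^ (T - L - 1) ≤ (m:ℝ) * ((T:ℝ) - 1) / ((D:ℝ) + (m:ℝ) * ((L:ℝ) + (T:ℝ))) :=
      mul_le_of_le_one_right (div_nonneg (by nlinarith) hdenpos.le) (hrpow1 _)
    have h2 : (m:ℝ) * ((T:ℝ) - 1) / ((D:ℝ) + (m:ℝ) * ((L:ℝ) + (T:ℝ))) < 1 :=
      (div_lt_one hdenpos).mpr hxlt
    linarith
  have h1x : (0:ℝ) < 1 - (m:ℝ) * ((T:ℝ) - 1) / ((D:ℝ) + (m:ℝ) * ((L:ℝ) + (T:ℝ)))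
      * r ^ (T - L - 1) := by linarith
  have hgx : g * (1 - (m:ℝ) * ((T:ℝ) - 1) / ((D:ℝ) + (m:ℝ) * ((L:ℝ) + (T:ℝ)))
      * r ^ (T - L - 1)) = 1 := by
    rw [hg]; exact one_div_mul_cancel (ne_of_gt h1x)
  -- geometric sums
  have hgeom : ∀ a : ℕ, ∑ t ∈ Finset.Ioc a T, r ^ (T - t) = (T:ℝ) * (1 - r ^ (T - a)) := by
    intro a
    by_cases haT : a < T
    · have hstep : ∑ t ∈ Finset.Ioc a T, r ^ (T - t) = ∑ j ∈ Finset.range (T - a), r ^ j := by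
        apply Finset.sum_nbij' (fun t => T - t) (fun j => T - j)
        · intro t ht; simp only [Finset.mem_Ioc] at ht; simp only [Finset.mem_range]; omega
        · intro j hj; simp only [Finset.mem_range] at hj; simp only [Finset.mem_Ioc]; omega
        · intro t ht; simp only [Finset.mem_Ioc] at ht; omega
        · intro j hj; simp only [Finset.mem_range] at hj; omega
        · intro t ht; rfl
      rw [hstep, geom_sum_eq hrne]
      have hre : r - 1 = -(1/(T:ℝ)) := by rw [hrdef]; ring
      rw [hre]
      field_simp
      ring
    · have hTa : T ≤ a := by omega
      rw [Finset.Ioc_eq_empty (by omega)]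
      have : T - a = 0 := by omega
      rw [this]
      simp
  have hS : ∀ a : ℕ, L + 1 ≤ a → ∑ t ∈ Finset.Ioc a T, p t = g * (1 - r ^ (T - a)) := by
    intro a ha
    have hcongr : ∑ t ∈ Finset.Ioc a T, p t
        = ∑ t ∈ Finset.Ioc a T, (g/(T:ℝ)) * r ^ (T - t) := by
      apply Finset.sum_congr rfl
      intro t ht
      simp only [Finset.mem_Ioc] at ht
      exact hp2 t (by omega) ht.2
    rw [hcongr, ← Finset.mul_sum, hgeom a]
    field_simp
  have hLT : L + 1 ≤ T := hTN
  have hcons := Finset.Icc_eq_cons_Ioc hLT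
  -- Part (i)
  have part1 : ∑ t ∈ Finset.Icc (L + 1) T, p t = 1 := by
    rw [hcons, Finset.sum_cons, hS (L+1) le_rfl, hp1]
    rw [show T - (L + 1) = T - L - 1 from by omega]
    exact stmt10aux1 _ _ _ _ _ _ hdenne hgx
  refine ⟨part1, ?_⟩
  -- Part (ii)
  have hIccIoc : ∀ a b : ℕ, Finset.Icc (a + 1) b = Finset.Ioc a b := by
    intro a b; ext x; simp only [Finset.mem_Icc, Finset.mem_Ioc]; omega
  have key : ∀ n : ℕ, L + 1 ≤ n → n ≤ T →
      ∑ t ∈ Finset.Icc (L + 1) T, p t *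
        ((if n < t then D + m * n else D + m * (t - 1) + m * T : ℕ) : ℝ)
      = g * ((D:ℝ) + (m:ℝ) * (n:ℝ)) := by
    intro n hn1
    induction n, hn1 using Nat.le_induction with
    | base =>
      intro _
      rw [hcons, Finset.sum_cons]
      rw [if_neg (lt_irrefl _)]
      have hsum2 : ∑ t ∈ Finset.Ioc (L+1) T, p t *
          ((if L + 1 < t then D + m * (L+1) else D + m * (t - 1) + m * T : ℕ) : ℝ)
          = ((D + m * (L+1) : ℕ) : ℝ) * (g * (1 - r ^ (T - (L+1)))) := by
        rw [← hS (L+1) le_rfl, Finset.mul_sum]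
        apply Finset.sum_congr rfl
        intro t ht
        simp only [Finset.mem_Ioc] at ht
        rw [if_pos (by omega)]
        ring
      rw [hsum2, hp1]
      rw [show L + 1 - 1 = L from by omega]
      rw [show T - (L + 1) = T - L - 1 from by omega]
      push_cast
      exact stmt10aux2 _ _ _ _ _ _ hdenne
    | succ n hn ih =>
      intro hn2
      have hnT : n ≤ T := by omega
      have spec := ih hnT
      have hsplit3 : ∀ f : ℕ → ℝ, ∑ t ∈ Finset.Icc (L + 1) T, f t
          = (∑ t ∈ Finset.Ioc L n, f t) + f (n+1) + ∑ t ∈ Finset.Ioc (n+1) T, f t := by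
        intro f
        rw [hIccIoc L T,
          ← Finset.sum_Ioc_consecutive _ (show L ≤ n+1 by omega) (show n+1 ≤ T by omega),
          ← hIccIoc L (n+1), Finset.sum_Icc_succ_top (by omega : L + 1 ≤ n + 1), hIccIoc]
      rw [hsplit3] at spec ⊢
      -- the common initial part
      have hA : ∑ t ∈ Finset.Ioc L n, p t *
            ((if n + 1 < t then D + m * (n+1) else D + m * (t - 1) + m * T : ℕ) : ℝ)
          = ∑ t ∈ Finset.Ioc L n, p t *
            ((if n < t then D + m * n else D + m * (t - 1) + m * T : ℕ) : ℝ) := by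
        apply Finset.sum_congr rfl
        intro t ht
        simp only [Finset.mem_Ioc] at ht
        rw [if_neg (by omega), if_neg (by omega)]
      rw [hA]
      -- tails
      have htail1 : ∑ t ∈ Finset.Ioc (n+1) T, p t *
            ((if n + 1 < t then D + m * (n+1) else D + m * (t - 1) + m * T : ℕ) : ℝ)
          = ((D + m * (n+1) : ℕ) : ℝ) * (g * (1 - r ^ (T - (n+1)))) := by
        rw [← hS (n+1) (by omega), Finset.mul_sum]
        apply Finset.sum_congr rfl
        intro t ht
        simp only [Finset.mem_Ioc] at ht
        rw [if_pos (by omega)]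
        ring
      have htail2 : ∑ t ∈ Finset.Ioc (n+1) T, p t *
            ((if n < t then D + m * n else D + m * (t - 1) + m * T : ℕ) : ℝ)
          = ((D + m * n : ℕ) : ℝ) * (g * (1 - r ^ (T - (n+1)))) := by
        rw [← hS (n+1) (by omega), Finset.mul_sum]
        apply Finset.sum_congr rfl
        intro t ht
        simp only [Finset.mem_Ioc] at ht
        rw [if_pos (by omega)]
        ring
      rw [htail1]
      rw [htail2] at spec
      -- middle terms
      rw [if_neg (lt_irrefl _), show n + 1 - 1 = n from by omega]
      rw [if_pos (Nat.lt_succ_self n)] at spec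
      rw [hp2 (n+1) (by omega) hn2] at spec ⊢
      push_cast at spec ⊢
      exact stmt10aux3 _ _ _ _ _ _ _ hTne spec
  -- conclude part (ii)
  intro n hn
  simp only [hminGB]
  by_cases hnT : n ≤ T
  · have h2 : min n B = n := by omega
    have h3 : m * n ≤ m * T := Nat.mul_le_mul_left _ hnT
    have h1 : min (m * min n B) G = m * n := by rw [h2]; omega
    rw [h1, key n hn hnT]
    push_cast
    exact le_rfl
  · have hTn : T ≤ n := by omega
    have hb1 : T ≤ min n B := by omega
    have hb2 : min n B ≤ B := min_le_right _ _
    have l1 : m * T ≤ m * min n B := Nat.mul_le_mul_left _ hb1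
    have l2 : m * min n B ≤ m * B := Nat.mul_le_mul_left _ hb2
    have h1 : min (m * min n B) G = m * T := by
      obtain ⟨k, hk⟩ : ∃ k, m * min n B = k := ⟨_, rfl⟩
      rw [hk] at l1 l2 ⊢
      omega
    rw [h1]
    have hEn : ∑ t ∈ Finset.Icc (L + 1) T, p t *
          ((if n < t then D + m * n else D + m * (t - 1) + m * T : ℕ) : ℝ)
        = ∑ t ∈ Finset.Icc (L + 1) T, p t *
          ((if T < t then D + m * T else D + m * (t - 1) + m * T : ℕ) : ℝ) := by
      apply Finset.sum_congr rfl
      intro t ht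
      simp only [Finset.mem_Icc] at ht
      rw [if_neg (by omega), if_neg (by omega)]
    rw [hEn, key T (by omega) le_rfl]
    push_cast
    exact le_rfl
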